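/- Let ŷ : 𝒳 → ℝ be any function, (x₁,y₁),…,(xₙ,yₙ) ∈ 𝒳 × ℝ, and define residuals ε̂ᵢ = yᵢ − ŷ(xᵢ). Define the residual-distribution forecasting procedure G_x(y) = (1/n)∑ᵢ 1{ŷ(x) + ε̂ᵢ ≤ y}. Then G is in-sample probabilistically calibrated: for the empirical measure P̂ₙ on the n pairs, P̂ₙ(G_{Xᵢ}(Yᵢ) ≤ α) ≤ α ≤ P̂ₙ(G_{Xᵢ}(Yᵢ−) < α) for all α ∈ (0,1). -/

import Mathlib

open Topology Filter

open Classical in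
/-- The residual-distribution forecasting procedure is in-sample probabilistically
calibrated with respect to the empirical measure of the training pairs. -/
theorem stmt_2 {X : Type*} (n : ℕ) (hn : 0 < n) (x : Fin n → X) (y : Fin n → ℝ)
    (yhat : X → ℝ) (ε : Fin n → ℝ) (hε : ∀ i, ε i = y i - yhat (x i))
    (G : X → ℝ → ℝ)
    (hG : ∀ x' t, G x' t = ((Finset.univ.filter fun i => yhat x' + ε i ≤ t).card : ℝ) / n)
    (α : ℝ) (hα : α ∈ Set.Ioo (0 : ℝ) 1) :
    ((Finset.univ.filter fun i => G (x i) (y i) ≤ α).card : ℝ) / n ≤ α ∧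
    α ≤ ((Finset.univ.filter fun i => Function.leftLim (G (x i)) (y i) < α).card : ℝ) / n := by
  have hn' : (0 : ℝ) < n := by exact_mod_cast hn
  have hy : ∀ i, y i = yhat (x i) + ε i := by
    intro i; rw [hε i]; ring
  -- rank functions
  set r : Fin n → ℕ := fun i => (Finset.univ.filter fun j => ε j ≤ ε i).card with hr
  set s : Fin n → ℕ := fun i => (Finset.univ.filter fun j => ε j < ε i).card with hs
  -- G at the data point
  have hGval : ∀ i, G (x i) (y i) = (r i : ℝ) / n := by
    intro i
    rw [hG, hr]
    simp only
    have hset : (Finset.univ.filter fun j => yhat (x i) + ε j ≤ y i)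
        = (Finset.univ.filter fun j => ε j ≤ ε i) := by
      ext j
      simp only [Finset.mem_filter, Finset.mem_univ, true_and, hy i]
      constructor <;> intro h <;> linarith
    rw [hset]
  -- left limit
  have hLL : ∀ i, Function.leftLim (G (x i)) (y i) = (s i : ℝ) / n := by
    intro i
    apply leftLim_eq_of_tendsto
    set B := (Finset.univ.filter fun j => ε j < ε i) with hB
    set M : ℝ := if h : B.Nonempty then B.sup' h (fun j => yhat (x i) + ε j) else y i - 1
      with hM
    have hMlt : M < y i := by
      rw [hM]
      split_ifs with h
      · rw [Finset.sup'_lt_iff]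
        intro j hj
        rw [hB, Finset.mem_filter] at hj
        rw [hy i]
        linarith [hj.2]
      · linarith
    have hconst : ∀ t ∈ Set.Ioo M (y i), G (x i) t = (s i : ℝ) / n := by
      intro t ht
      rw [hG, hs]
      simp only
      have hset : (Finset.univ.filter fun j => yhat (x i) + ε j ≤ t)
          = (Finset.univ.filter fun j => ε j < ε i) := by
        ext j
        simp only [Finset.mem_filter, Finset.mem_univ, true_and]
        constructor
        · intro h
          by_contra hc
          push_neg at hc
          have : y i ≤ yhat (x i) + ε j := by rw [hy i]; linarith
          linarith [ht.2]
        · intro h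
          have hjB : j ∈ B := by rw [hB]; simp [h]
          have : yhat (x i) + ε j ≤ M := by
            have hne : B.Nonempty := ⟨j, hjB⟩
            rw [hM, dif_pos hne]
            exact Finset.le_sup' (fun k => yhat (x i) + ε k) hjB
          linarith [ht.1]
      rw [hset]
    have hmem : Set.Ioo M (y i) ∈ 𝓝[<] (y i) :=
      Ioo_mem_nhdsLT_of_mem ⟨hMlt, le_refl _⟩
    refine Filter.Tendsto.congr' ?_ tendsto_const_nhds
    filter_upwards [hmem] with t ht
    exact (hconst t ht).symm
  constructor
  · -- first inequality
    set S := (Finset.univ.filter fun i => G (x i) (y i) ≤ α) with hS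
    rw [div_le_iff₀ hn']
    rcases S.eq_empty_or_nonempty with h | h
    · rw [h]
      simp only [Finset.card_empty, Nat.cast_zero]
      nlinarith [hα.1]
    · obtain ⟨i₀, hi₀S, hi₀max⟩ := Finset.exists_max_image S ε h
      have hsub : S ⊆ Finset.univ.filter fun j => ε j ≤ ε i₀ := by
        intro i hi
        simp only [Finset.mem_filter, Finset.mem_univ, true_and]
        exact hi₀max i hi
      have h1 : (S.card : ℝ) ≤ r i₀ := by
        exact_mod_cast Finset.card_le_card hsub
      have h2 : (r i₀ : ℝ) ≤ α * n := by
        have := (Finset.mem_filter.mp hi₀S).2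
        rw [hGval i₀, div_le_iff₀ hn'] at this
        exact this
      linarith
  · -- second inequality
    set A := (Finset.univ.filter fun i => Function.leftLim (G (x i)) (y i) < α) with hA
    set T := (Finset.univ.filter fun i => ¬ Function.leftLim (G (x i)) (y i) < α) with hT
    have hAT : A.card + T.card = n := by
      rw [hA, hT, Finset.card_filter_add_card_filter_not]
      simp
    rw [le_div_iff₀ hn']
    have hAcard : (A.card : ℝ) = n - T.card := by
      have : (A.card : ℝ) + T.card = n := by exact_mod_cast hAT
      linarith
    rcases T.eq_empty_or_nonempty with h | h
    · rw [hAcard, h]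
      simp
      nlinarith [hα.2]
    · obtain ⟨i₀, hi₀T, hi₀min⟩ := Finset.exists_min_image T ε h
      have hsub : T ⊆ Finset.univ.filter fun j => ¬ ε j < ε i₀ := by
        intro i hi
        simp only [Finset.mem_filter, Finset.mem_univ, true_and, not_lt]
        exact hi₀min i hi
      have hcompl : s i₀ + (Finset.univ.filter fun j => ¬ ε j < ε i₀).card = n := by
        rw [hs]
        simp only
        rw [Finset.card_filter_add_card_filter_not]
        simp
      have h1 : (T.card : ℝ) ≤ n - s i₀ := by
        have := Finset.card_le_card hsub
        have h2 : ((Finset.univ.filter fun j => ¬ ε j < ε i₀).card : ℝ) = n - s i₀ := by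
          have : ((s i₀ : ℝ)) + (Finset.univ.filter fun j => ¬ ε j < ε i₀).card = n := by
            exact_mod_cast hcompl
          linarith
        calc (T.card : ℝ) ≤ _ := by exact_mod_cast this
          _ = n - s i₀ := h2
      have h2 : α * n ≤ (s i₀ : ℝ) := by
        have := (Finset.mem_filter.mp hi₀T).2
        rw [hLL i₀] at this
        push_neg at this
        rw [le_div_iff₀ hn'] at this
        exact this
      linarith
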